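/- arXiv:1709.02113 — 4 statements merged into one kernel-verified Lean document; each statement's English description precedes it below -/
import Mathlib

section
/- For a > 1 and any nonnegative integer k, the tail sum of the series of j^{-a} satisfies 1/((a-1)(k+1)^{a-1}) ≤ Σ_{j=k+1}^∞ j^{-a} ≤ 1/((a-1)(k+1/2)^{a-1}). -/
open MeasureTheory

/-- Bernoulli's inequality for nonpositive exponents. -/
lemma bernoulli_nonpos {s p : ℝ} (hs : -1 < s) (hp : p ≤ 0) :
    1 + p * s ≤ (1 + s) ^ p := by
  have h1 : 0 < 1 + s := by linarith
  have hlog : Real.log (1 + s) ≤ s := by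
    have := Real.log_le_sub_one_of_pos h1
    linarith
  calc 1 + p * s ≤ 1 + p * Real.log (1 + s) := by nlinarith
    _ ≤ Real.exp (p * Real.log (1 + s)) := by
        linarith [Real.add_one_le_exp (p * Real.log (1 + s))]
    _ = (1 + s) ^ p := by rw [Real.rpow_def_of_pos h1, mul_comm]

/-- Midpoint inequality: for `0 ≤ s ≤ 1/2` and `b > 0`,
`2*b*s ≤ (1-s)^(-b) - (1+s)^(-b)`. -/
lemma midpoint_ineq {b : ℝ} (hb : 0 < b) {s : ℝ} (hs0 : 0 ≤ s) (hs2 : s ≤ 1/2) :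
    2 * b * s ≤ (1 - s) ^ (-b) - (1 + s) ^ (-b) := by
  set φ : ℝ → ℝ := fun s => (1 - s) ^ (-b) - (1 + s) ^ (-b) - 2 * b * s with hφ
  have key : MonotoneOn φ (Set.Icc 0 (1/2)) := by
    apply monotoneOn_of_hasDerivWithinAt_nonneg (convex_Icc 0 (1/2))
      (f' := fun s => b * (1 - s) ^ (-b - 1) + b * (1 + s) ^ (-b - 1) - 2 * b)
    · -- continuity
      intro x hx
      simp only [Set.mem_Icc] at hx
      have h1 : (1 : ℝ) - x ≠ 0 := by intro h; nlinarith [hx.1, hx.2]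
      have h2 : (1 : ℝ) + x ≠ 0 := by intro h; nlinarith [hx.1]
      apply ContinuousWithinAt.sub
      apply ContinuousWithinAt.sub
      · exact ((Real.continuousAt_rpow_const _ _ (Or.inl h1)).comp
          (continuous_const.sub continuous_id).continuousAt).continuousWithinAt
      · exact ((Real.continuousAt_rpow_const _ _ (Or.inl h2)).comp
          (continuous_const.add continuous_id).continuousAt).continuousWithinAt
      · exact (continuous_const.mul continuous_id).continuousWithinAt
    · -- derivative
      intro x hx
      rw [interior_Icc] at hx
      obtain ⟨hx0, hx2⟩ := hx
      have h1 : (1 : ℝ) - x ≠ 0 := by intro h; nlinarith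
      have h2 : (1 : ℝ) + x ≠ 0 := by intro h; nlinarith
      have d1 : HasDerivAt (fun s : ℝ => (1 - s) ^ (-b)) (b * (1 - x) ^ (-b - 1)) x := by
        have := (Real.hasDerivAt_rpow_const (x := 1 - x) (p := -b) (Or.inl h1)).comp x
          ((hasDerivAt_id x).const_sub 1)
        exact this.congr_deriv (by ring)
      have d2 : HasDerivAt (fun s : ℝ => (1 + s) ^ (-b)) (-b * (1 + x) ^ (-b - 1)) x := by
        have := (Real.hasDerivAt_rpow_const (x := 1 + x) (p := -b) (Or.inl h2)).comp x
          ((hasDerivAt_id x).const_add 1)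
        exact this.congr_deriv (by ring)
      have d3 : HasDerivAt (fun s : ℝ => 2 * b * s) (2 * b) x := by
        simpa using (hasDerivAt_id x).const_mul (2 * b)
      have hd := (d1.sub d2).sub d3
      have heq : b * (1 - x) ^ (-b - 1) - -b * (1 + x) ^ (-b - 1) - 2 * b
          = b * (1 - x) ^ (-b - 1) + b * (1 + x) ^ (-b - 1) - 2 * b := by ring
      rw [heq] at hd
      exact hd.hasDerivWithinAt
    · -- nonneg derivative
      intro x hx
      rw [interior_Icc] at hx
      obtain ⟨hx0, hx2⟩ := hx
      set u := (1 - x) ^ (-b - 1) with hu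
      set v := (1 + x) ^ (-b - 1) with hv
      have h1 : (0 : ℝ) < 1 - x := by linarith
      have h2 : (0 : ℝ) < 1 + x := by linarith
      have hupos : 0 < u := Real.rpow_pos_of_pos h1 _
      have hvpos : 0 < v := Real.rpow_pos_of_pos h2 _
      have huv : 1 ≤ u * v := by
        rw [hu, hv, ← Real.mul_rpow h1.le h2.le]
        apply Real.one_le_rpow_of_pos_of_le_one_of_nonpos
        · nlinarith
        · nlinarith
        · linarith
      have h2le : 2 ≤ u + v := by
        nlinarith [sq_nonneg (Real.sqrt u - Real.sqrt v), Real.sq_sqrt hupos.le,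
          Real.sq_sqrt hvpos.le, Real.sqrt_nonneg u, Real.sqrt_nonneg v,
          Real.one_le_sqrt.mpr huv, Real.sqrt_mul hupos.le v, Real.sqrt_nonneg (u*v)]
      have heq : b * u + b * v - 2 * b = b * (u + v - 2) := by ring
      rw [heq]
      have : (0:ℝ) ≤ u + v - 2 := by linarith
      positivity
  have h0 : φ 0 = 0 := by simp [hφ]
  have := key (Set.mem_Icc.mpr ⟨le_refl 0, by norm_num⟩) (Set.mem_Icc.mpr ⟨hs0, hs2⟩) hs0
  rw [h0] at this
  simp only [hφ] at this
  linarith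

/-- Telescoping sum for a nonincreasing sequence tending to zero. -/
lemma telescope_hasSum (g : ℕ → ℝ) (hmono : ∀ j, g (j+1) ≤ g j)
    (hlim : Filter.Tendsto g Filter.atTop (nhds 0)) :
    HasSum (fun j => g j - g (j+1)) (g 0) := by
  rw [hasSum_iff_tendsto_nat_of_nonneg (fun j => by linarith [hmono j])]
  have h : ∀ n : ℕ, ∑ i ∈ Finset.range n, (g i - g (i+1)) = g 0 - g n :=
    fun n => Finset.sum_range_sub' g n
  simp only [h]
  simpa using (tendsto_const_nhds (x := g 0)).sub hlim

/-- Tail bounds for the series `∑ j^{-a}`, `a > 1`: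
`1/((a-1)(k+1)^{a-1}) ≤ ∑_{j=k+1}^∞ j^{-a} ≤ 1/((a-1)(k+1/2)^{a-1})`. -/
theorem tail_sum_bounds (a : ℝ) (ha : 1 < a) (k : ℕ) :
    1 / ((a - 1) * ((k : ℝ) + 1) ^ (a - 1))
      ≤ ∑' j : ℕ, ((k : ℝ) + 1 + j) ^ (-a) ∧
    ∑' j : ℕ, ((k : ℝ) + 1 + j) ^ (-a)
      ≤ 1 / ((a - 1) * ((k : ℝ) + 1 / 2) ^ (a - 1)) := by
  have hb : 0 < a - 1 := by linarith
  set f : ℕ → ℝ := fun j => ((k : ℝ) + 1 + j) ^ (-a) with hf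
  have hlim : ∀ d : ℝ, 0 < d → Filter.Tendsto (fun j : ℕ => ((k:ℝ) + d + j) ^ (1 - a))
      Filter.atTop (nhds 0) := by
    intro d hd
    have h1 : Filter.Tendsto (fun j : ℕ => (k:ℝ) + d + j) Filter.atTop Filter.atTop :=
      Filter.tendsto_atTop_add_const_left _ _ tendsto_natCast_atTop_atTop
    refine ((tendsto_rpow_neg_atTop (by linarith : 0 < a - 1)).comp h1).congr ?_
    intro x; simp only [Function.comp]; rw [show -(a-1) = 1-a by ring]
  have hmono : ∀ (d : ℝ), 0 < d → ∀ j : ℕ,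
      ((k:ℝ) + d + ((j+1:ℕ):ℝ)) ^ (1 - a) ≤ ((k:ℝ) + d + j) ^ (1 - a) := by
    intro d hd j
    apply Real.rpow_le_rpow_of_nonpos (by positivity) (by push_cast; linarith) (by linarith)
  have hU : HasSum
      (fun j : ℕ => ((k:ℝ) + 1/2 + j) ^ (1-a) - ((k:ℝ) + 1/2 + ((j+1:ℕ):ℝ)) ^ (1-a))
      (((k:ℝ) + 1/2 + (0:ℕ)) ^ (1-a)) :=
    telescope_hasSum (fun j : ℕ => ((k:ℝ) + 1/2 + j) ^ (1-a))
      (hmono (1/2) (by norm_num)) (hlim (1/2) (by norm_num))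
  have hV : HasSum
      (fun j : ℕ => ((k:ℝ) + 1 + j) ^ (1-a) - ((k:ℝ) + 1 + ((j+1:ℕ):ℝ)) ^ (1-a))
      (((k:ℝ) + 1 + (0:ℕ)) ^ (1-a)) :=
    telescope_hasSum (fun j : ℕ => ((k:ℝ) + 1 + j) ^ (1-a))
      (hmono 1 (by norm_num)) (hlim 1 (by norm_num))
  have hc1 : ∀ j : ℕ, (1:ℝ) ≤ (k:ℝ) + 1 + j := by
    intro j
    have h1 : (0:ℝ) ≤ (k:ℝ) := Nat.cast_nonneg k
    have h2 : (0:ℝ) ≤ (j:ℝ) := Nat.cast_nonneg j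
    linarith
  -- (A) lower termwise
  have hA : ∀ j : ℕ, ((k:ℝ) + 1 + j) ^ (1-a) - ((k:ℝ) + 1 + ((j+1:ℕ):ℝ)) ^ (1-a)
      ≤ (a - 1) * f j := by
    intro j
    set c : ℝ := (k:ℝ) + 1 + j with hc
    have hc0 : (0:ℝ) < c := lt_of_lt_of_le one_pos (hc1 j)
    have h1c : (0:ℝ) < 1/c := by positivity
    have hbern : 1 + (1-a) * (1/c) ≤ (1 + 1/c) ^ (1-a) :=
      bernoulli_nonpos (by linarith) (by linarith)
    have hsplit : (k:ℝ) + 1 + ((j+1:ℕ):ℝ) = c * (1 + 1/c) := by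
      push_cast
      field_simp [hc]
      ring
    have hmul : ((k:ℝ) + 1 + ((j+1:ℕ):ℝ)) ^ (1-a) = c ^ (1-a) * (1 + 1/c) ^ (1-a) := by
      rw [hsplit, Real.mul_rpow hc0.le (by positivity)]
    have hpow : c ^ (1-a) / c = c ^ (-a) := by
      rw [show (1-a) = (-a) + 1 by ring, Real.rpow_add hc0, Real.rpow_one, mul_div_assoc,
        div_self hc0.ne', mul_one]
    have hcp : 0 < c ^ (1-a) := Real.rpow_pos_of_pos hc0 _
    have hstep : c ^ (1-a) * (1 + (1-a) * (1/c)) ≤ ((k:ℝ) + 1 + ((j+1:ℕ):ℝ)) ^ (1-a) := by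
      rw [hmul]; exact mul_le_mul_of_nonneg_left hbern hcp.le
    have hexp : c ^ (1-a) * (1 + (1-a) * (1/c)) = c ^ (1-a) + (1-a) * (c ^ (1-a) / c) := by
      field_simp
    have hfj : f j = c ^ (1-a) / c := by rw [hpow]
    rw [hfj]
    rw [hexp] at hstep
    linarith
  -- (B) upper termwise
  have hB : ∀ j : ℕ, (a - 1) * f j
      ≤ ((k:ℝ) + 1/2 + j) ^ (1-a) - ((k:ℝ) + 1/2 + ((j+1:ℕ):ℝ)) ^ (1-a) := by
    intro j
    set c : ℝ := (k:ℝ) + 1 + j with hc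
    have hc1j : (1:ℝ) ≤ c := hc1 j
    have hc0 : (0:ℝ) < c := lt_of_lt_of_le one_pos hc1j
    set s : ℝ := 1/(2*c) with hs
    have hs0 : 0 ≤ s := by positivity
    have hs2 : s ≤ 1/2 := by
      rw [hs]
      rw [div_le_div_iff₀ (by positivity) (by norm_num)]
      linarith
    have h1s : (0:ℝ) < 1 - s := by
      have : s < 1 := lt_of_le_of_lt hs2 (by norm_num)
      linarith
    have h2s : (0:ℝ) < 1 + s := by linarith
    have hm := midpoint_ineq hb hs0 hs2
    rw [show -(a-1) = 1-a by ring] at hm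
    have hcs : c * s = 1/2 := by
      rw [hs]; field_simp
    have heq1 : (k:ℝ) + 1/2 + j = c * (1-s) := by
      have : c * (1-s) = c - c * s := by ring
      rw [this, hcs, hc]; ring
    have heq2 : (k:ℝ) + 1/2 + ((j+1:ℕ):ℝ) = c * (1+s) := by
      have : c * (1+s) = c + c * s := by ring
      rw [this, hcs, hc]; push_cast; ring
    have hmul1 : ((k:ℝ) + 1/2 + j) ^ (1-a) = c ^ (1-a) * (1-s) ^ (1-a) := by
      rw [heq1, Real.mul_rpow hc0.le h1s.le]
    have hmul2 : ((k:ℝ) + 1/2 + ((j+1:ℕ):ℝ)) ^ (1-a) = c ^ (1-a) * (1+s) ^ (1-a) := by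
      rw [heq2, Real.mul_rpow hc0.le h2s.le]
    have hpow : c ^ (1-a) / c = c ^ (-a) := by
      rw [show (1-a) = (-a) + 1 by ring, Real.rpow_add hc0, Real.rpow_one, mul_div_assoc,
        div_self hc0.ne', mul_one]
    have hcp : 0 < c ^ (1-a) := Real.rpow_pos_of_pos hc0 _
    have hstep : c ^ (1-a) * (2 * (a-1) * s) ≤
        c ^ (1-a) * ((1-s) ^ (1-a) - (1+s) ^ (1-a)) :=
      mul_le_mul_of_nonneg_left hm hcp.le
    have hlhs : c ^ (1-a) * (2 * (a-1) * s) = (a-1) * (c ^ (1-a) / c) := by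
      rw [hs]
      field_simp
    have hfj : f j = c ^ (1-a) / c := by rw [hpow]
    rw [hfj, hmul1, hmul2]
    rw [hlhs] at hstep
    linarith [hstep, mul_sub (c ^ (1-a)) ((1-s) ^ (1-a)) ((1+s) ^ (1-a))]
  -- summability of f
  have hfnn : ∀ j, 0 ≤ f j := fun j => Real.rpow_nonneg (by positivity) _
  have hUscaled : HasSum
      (fun j : ℕ => (a-1)⁻¹ * (((k:ℝ) + 1/2 + j) ^ (1-a) - ((k:ℝ) + 1/2 + ((j+1:ℕ):ℝ)) ^ (1-a)))
      ((a-1)⁻¹ * (((k:ℝ) + 1/2 + (0:ℕ)) ^ (1-a))) := hU.mul_left _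
  have hVscaled : HasSum
      (fun j : ℕ => (a-1)⁻¹ * (((k:ℝ) + 1 + j) ^ (1-a) - ((k:ℝ) + 1 + ((j+1:ℕ):ℝ)) ^ (1-a)))
      ((a-1)⁻¹ * (((k:ℝ) + 1 + (0:ℕ)) ^ (1-a))) := hV.mul_left _
  have hB' : ∀ j : ℕ, f j ≤ (a-1)⁻¹ *
      (((k:ℝ) + 1/2 + j) ^ (1-a) - ((k:ℝ) + 1/2 + ((j+1:ℕ):ℝ)) ^ (1-a)) := by
    intro j
    rw [← inv_mul_cancel_left₀ hb.ne' (f j)]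
    exact mul_le_mul_of_nonneg_left (hB j) (by positivity)
  have hA' : ∀ j : ℕ, (a-1)⁻¹ *
      (((k:ℝ) + 1 + j) ^ (1-a) - ((k:ℝ) + 1 + ((j+1:ℕ):ℝ)) ^ (1-a)) ≤ f j := by
    intro j
    rw [← inv_mul_cancel_left₀ hb.ne' (f j)]
    exact mul_le_mul_of_nonneg_left (hA j) (by positivity)
  have hfsum : Summable f := Summable.of_nonneg_of_le hfnn hB' hUscaled.summable
  constructor
  · -- lower bound
    have h1 : (a-1)⁻¹ * (((k:ℝ) + 1 + (0:ℕ)) ^ (1-a)) ≤ ∑' j, f j := by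
      rw [← hVscaled.tsum_eq]
      exact Summable.tsum_le_tsum hA' hVscaled.summable hfsum
    have h2 : (a-1)⁻¹ * (((k:ℝ) + 1 + (0:ℕ)) ^ (1-a))
        = 1 / ((a - 1) * ((k : ℝ) + 1) ^ (a - 1)) := by
      rw [Nat.cast_zero, add_zero, show (1-a) = -(a-1) by ring,
        Real.rpow_neg (by positivity), ← mul_inv]
      exact (one_div _).symm
    rw [← h2]
    exact h1
  · -- upper bound
    have h1 : ∑' j, f j ≤ (a-1)⁻¹ * (((k:ℝ) + 1/2 + (0:ℕ)) ^ (1-a)) := by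
      rw [← hUscaled.tsum_eq]
      exact Summable.tsum_le_tsum hB' hfsum hUscaled.summable
    have h2 : (a-1)⁻¹ * (((k:ℝ) + 1/2 + (0:ℕ)) ^ (1-a))
        = 1 / ((a - 1) * ((k : ℝ) + 1/2) ^ (a - 1)) := by
      rw [Nat.cast_zero, add_zero, show (1-a) = -(a-1) by ring,
        Real.rpow_neg (by positivity), ← mul_inv]
      exact (one_div _).symm
    rw [← h2]
    exact h1
end

section
/- If ω is the uniform measure on [−1/2, 1/2], then C(M,ω) = 1/(2^M (M+1)). -/
lemma uniform_prod_le (L : List ℕ) :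
    (L.map fun r => (1 : ℝ) / (2 ^ r * (r + 1))).prod
      ≤ 1 / (2 ^ L.sum * (L.sum + 1)) := by
  induction L with
  | nil => simp
  | cons r L ih =>
      simp only [List.map_cons, List.prod_cons, List.sum_cons]
      refine le_trans (mul_le_mul_of_nonneg_left ih (by positivity)) ?_
      rw [div_mul_div_comm, one_mul, Nat.cast_add]
      apply one_div_le_one_div_of_le (by positivity)
      rw [pow_add, Real.rpow_natCast]
      have h1 : (0:ℝ) ≤ (r:ℝ) := by positivity
      have h2 : (0:ℝ) ≤ (L.sum:ℝ) := by positivity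
      have h3 : (0:ℝ) < (2:ℝ) ^ r * 2 ^ L.sum := by positivity
      nlinarith [mul_nonneg h1 h2]

/-- For the uniform measure on `[-1/2,1/2]`, where `m_r = 2^{-r}/(r+1)`, the
constant `C(M,ω) = max{∏ m_{r_j} : r₁+⋯+r_ℓ = M, r_j ≥ 1}` equals
`1/(2^M (M+1))`. -/
theorem C_uniform_symmetric (M : ℕ) (hM : 1 ≤ M) :
    sSup {p : ℝ | ∃ L : List ℕ, (∀ r ∈ L, 0 < r) ∧ L.sum = M ∧
        p = (L.map fun r => (1 : ℝ) / (2 ^ r * (r + 1))).prod}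
      = 1 / (2 ^ M * (M + 1)) := by
  apply IsGreatest.csSup_eq
  constructor
  · exact ⟨[M], by simpa using Nat.lt_of_lt_of_le Nat.zero_lt_one hM, by simp, by simp⟩
  · rintro p ⟨L, -, hsum, rfl⟩
    have := uniform_prod_le L
    rwa [hsum] at this
end

section
/- If ω is the logistic measure on ℝ with scale λ > 0, then (1/2) λ^M M! < C(M,ω) < 2 λ^M M!. -/
open MeasureTheory

/-- The logistic measure on `ℝ` with scale `λ > 0`. -/
noncomputable def logisticMeasure (lam : ℝ) : Measure ℝ :=
  (volume : Measure ℝ).withDensity fun x =>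
    ENNReal.ofReal (Real.exp (-x / lam) / (lam * (1 + Real.exp (-x / lam)) ^ 2))

section Aux
open Real Set

lemma dens_even (lam a : ℝ) : Real.exp (-a) / (lam * (1 + Real.exp (-a)) ^ 2)
    = Real.exp a / (lam * (1 + Real.exp a) ^ 2) := by
  rcases eq_or_ne lam 0 with h | h
  · simp [h]
  rw [Real.exp_neg]
  have h2 := (Real.exp_pos a).ne'
  field_simp
  ring

lemma moment_eq' {lam : ℝ} (hlam : 0 < lam) (r : ℕ) :
    ∫ x, |x| ^ r ∂(logisticMeasure lam)
      = 2 * ∫ x in Ioi (0:ℝ),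
          x ^ r * (Real.exp (-x / lam) / (lam * (1 + Real.exp (-x / lam)) ^ 2)) := by
  have hmeas : Measurable (fun x : ℝ =>
      Real.toNNReal (Real.exp (-x / lam) / (lam * (1 + Real.exp (-x / lam)) ^ 2))) := by
    fun_prop
  have h1 : ∫ x, |x| ^ r ∂(logisticMeasure lam)
      = ∫ x : ℝ, (Real.toNNReal (Real.exp (-x / lam) / (lam * (1 + Real.exp (-x / lam)) ^ 2)))
          • |x| ^ r := by
    exact integral_withDensity_eq_integral_smul hmeas _
  rw [h1]
  have h2 : ∀ x : ℝ, (Real.toNNReal (Real.exp (-x / lam) / (lam * (1 + Real.exp (-x / lam)) ^ 2)))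
          • |x| ^ r
      = |x| ^ r * (Real.exp (-|x| / lam) / (lam * (1 + Real.exp (-|x| / lam)) ^ 2)) := by
    intro x
    have hd : Real.exp (-x / lam) / (lam * (1 + Real.exp (-x / lam)) ^ 2)
        = Real.exp (-|x| / lam) / (lam * (1 + Real.exp (-|x| / lam)) ^ 2) := by
      rcases abs_cases x with ⟨h, _⟩ | ⟨h, _⟩
      · rw [h]
      · rw [h, show (-(-x):ℝ)/lam = x/lam by ring, show (-x:ℝ)/lam = -(x/lam) by ring]
        exact dens_even lam (x / lam)
    rw [NNReal.smul_def, Real.coe_toNNReal _ (by positivity), smul_eq_mul, hd]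
    ring
  simp_rw [h2]
  exact integral_comp_abs
    (f := fun y : ℝ => y ^ r * (Real.exp (-y / lam) / (lam * (1 + Real.exp (-y / lam)) ^ 2)))


lemma intOn_pow_exp {b : ℝ} (hb : 0 < b) (r : ℕ) :
    IntegrableOn (fun x : ℝ => x ^ r * Real.exp (-(b * x))) (Ioi 0) := by
  have h := integrableOn_rpow_mul_exp_neg_mul_rpow (s := (r : ℝ)) (p := 1) (b := b)
    (by have : (0:ℝ) ≤ r := Nat.cast_nonneg r; linarith) zero_lt_one hb
  refine h.congr_fun (fun x hx => ?_) measurableSet_Ioi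
  beta_reduce
  rw [Real.rpow_one, Real.rpow_natCast, neg_mul]

lemma int_pow_exp {b : ℝ} (hb : 0 < b) (r : ℕ) :
    ∫ x in Ioi (0:ℝ), x ^ r * Real.exp (-(b * x)) = (1 / b) ^ (r + 1) * r.factorial := by
  have h := integral_rpow_mul_exp_neg_mul_Ioi (a := (r : ℝ) + 1) (by positivity) hb
  have h2 : Real.Gamma ((r:ℝ) + 1) = r.factorial := Real.Gamma_nat_eq_factorial r
  rw [h2, show ((r:ℝ)+1) = ((r+1 : ℕ) : ℝ) by push_cast; ring, Real.rpow_natCast] at h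
  rw [← h]
  refine setIntegral_congr_fun measurableSet_Ioi (fun x hx => ?_)
  rw [show (((r+1:ℕ):ℝ)-1) = ((r:ℕ):ℝ) by push_cast; ring, Real.rpow_natCast]

lemma half_int_bounds {lam : ℝ} (hlam : 0 < lam) (r : ℕ) :
    lam ^ r * r.factorial * (1 - (1/2 : ℝ) ^ r)
      ≤ ∫ x in Ioi (0:ℝ), x ^ r * (Real.exp (-x / lam) / (lam * (1 + Real.exp (-x / lam)) ^ 2)) ∧
    ∫ x in Ioi (0:ℝ), x ^ r * (Real.exp (-x / lam) / (lam * (1 + Real.exp (-x / lam)) ^ 2))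
      ≤ lam ^ r * r.factorial * (1 - (1/2 : ℝ) ^ (r+1) + (1/3 : ℝ) ^ (r+1)) := by
  set f : ℝ → ℝ := fun x => x ^ r * (Real.exp (-x / lam) / (lam * (1 + Real.exp (-x / lam)) ^ 2))
    with hf
  have hF : ∀ b : ℝ, 0 < b → IntegrableOn (fun x : ℝ => x ^ r * Real.exp (-(b * x))) (Ioi 0) :=
    fun b hb => intOn_pow_exp hb r
  have h1 : (0:ℝ) < 1/lam := by positivity
  have h2 : (0:ℝ) < 2/lam := by positivity
  have h3 : (0:ℝ) < 3/lam := by positivity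
  set G1 : ℝ → ℝ := fun x =>
    (1/lam) * (x ^ r * Real.exp (-(1/lam * x))) - (2/lam) * (x ^ r * Real.exp (-(2/lam * x)))
    with hG1
  set G2 : ℝ → ℝ := fun x =>
    (1/lam) * (x ^ r * Real.exp (-(1/lam * x))) - (1/lam) * (x ^ r * Real.exp (-(2/lam * x)))
      + (1/lam) * (x ^ r * Real.exp (-(3/lam * x)))
    with hG2
  have hG1i : IntegrableOn G1 (Ioi 0) := ((hF _ h1).const_mul _).sub ((hF _ h2).const_mul _)
  have hG2i : IntegrableOn G2 (Ioi 0) :=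
    (((hF _ h1).const_mul _).sub ((hF _ h2).const_mul _)).add ((hF _ h3).const_mul _)
  -- pointwise facts
  have hexp2 : ∀ x : ℝ, Real.exp (-(2/lam * x)) = Real.exp (-(x/lam)) * Real.exp (-(x/lam)) := by
    intro x
    rw [← Real.exp_add]; congr 1; ring
  have hexp3 : ∀ x : ℝ, Real.exp (-(3/lam * x))
      = Real.exp (-(x/lam)) * Real.exp (-(x/lam)) * Real.exp (-(x/lam)) := by
    intro x
    rw [← Real.exp_add, ← Real.exp_add]; congr 1; ring
  have hexp1 : ∀ x : ℝ, Real.exp (-(1/lam * x)) = Real.exp (-(x/lam)) := by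
    intro x; congr 1; ring
  have hfx : ∀ x : ℝ, f x = x ^ r * (Real.exp (-(x/lam)) / (lam * (1 + Real.exp (-(x/lam))) ^ 2)) := by
    intro x
    rw [hf]
    simp only [neg_div]
  have hfle : ∀ x ∈ Ioi (0:ℝ), f x ≤ G2 x := by
    intro x hx
    have hx0 : (0:ℝ) ≤ x := (le_of_lt hx)
    set t := Real.exp (-(x/lam)) with hT
    have ht : 0 < t := Real.exp_pos _
    have key : t / (1 + t) ^ 2 ≤ t - t^2 + t^3 := by
      rw [div_le_iff₀ (by positivity)]
      nlinarith [pow_nonneg ht.le 3, pow_nonneg ht.le 4, sq_nonneg t]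
    have h1t : (1 + t) ≠ 0 := by positivity
    have hl : lam ≠ 0 := ne_of_gt hlam
    calc f x = (x ^ r / lam) * (t / (1 + t) ^ 2) := by
          rw [hfx x, ← hT]; field_simp
      _ ≤ (x ^ r / lam) * (t - t^2 + t^3) := by
          apply mul_le_mul_of_nonneg_left key (by positivity)
      _ = G2 x := by
          rw [hG2]
          simp only
          rw [hexp1, hexp2, hexp3, ← hT]
          have hl : lam ≠ 0 := ne_of_gt hlam
          field_simp
  have hgle : ∀ x ∈ Ioi (0:ℝ), G1 x ≤ f x := by
    intro x hx
    have hx0 : (0:ℝ) ≤ x := (le_of_lt hx)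
    set t := Real.exp (-(x/lam)) with hT
    have ht : 0 < t := Real.exp_pos _
    have key : t - 2*t^2 ≤ t / (1 + t) ^ 2 := by
      rw [le_div_iff₀ (by positivity)]
      nlinarith [pow_nonneg ht.le 3, sq_nonneg t]
    calc G1 x = (x ^ r / lam) * (t - 2*t^2) := by
          rw [hG1]
          simp only
          rw [hexp1, hexp2, ← hT]
          have hl : lam ≠ 0 := ne_of_gt hlam
          field_simp
      _ ≤ (x ^ r / lam) * (t / (1 + t) ^ 2) := by
          apply mul_le_mul_of_nonneg_left key (by positivity)
      _ = f x := by
          have h1t : (1 + t) ≠ 0 := by positivity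
          have hl : lam ≠ 0 := ne_of_gt hlam
          rw [hfx x, ← hT]; field_simp
  -- integrability of f
  have hfm : AEStronglyMeasurable f (volume.restrict (Ioi 0)) := by
    apply Measurable.aestronglyMeasurable
    fun_prop
  have hfi : IntegrableOn f (Ioi 0) := by
    apply Integrable.mono' ((hF _ h1).const_mul (1/lam)) hfm
    rw [ae_restrict_iff' measurableSet_Ioi]
    apply ae_of_all
    intro x hx
    have hx0 : (0:ℝ) ≤ x := le_of_lt hx
    set t := Real.exp (-(x/lam)) with hT
    have ht : 0 < t := Real.exp_pos _
    have hf0 : 0 ≤ f x := by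
      rw [hfx x, ← hT]; positivity
    rw [Real.norm_of_nonneg hf0, hfx x, ← hT]
    have key : t / (lam * (1 + t) ^ 2) ≤ t / lam := by
      apply div_le_div_of_nonneg_left ht.le hlam
      nlinarith [sq_nonneg t]
    calc x ^ r * (t / (lam * (1 + t) ^ 2)) ≤ x ^ r * (t / lam) :=
          mul_le_mul_of_nonneg_left key (by positivity)
      _ = 1/lam * (x ^ r * Real.exp (-(1/lam * x))) := by rw [hexp1, ← hT]; ring
  -- integral values
  have hI1 : ∫ x in Ioi (0:ℝ), x ^ r * Real.exp (-(1/lam * x)) = lam ^ (r+1) * r.factorial := by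
    rw [int_pow_exp h1 r, one_div, inv_div, div_one]
  have hI2 : ∫ x in Ioi (0:ℝ), x ^ r * Real.exp (-(2/lam * x)) = (lam/2) ^ (r+1) * r.factorial := by
    rw [int_pow_exp h2 r, one_div, inv_div]
  have hI3 : ∫ x in Ioi (0:ℝ), x ^ r * Real.exp (-(3/lam * x)) = (lam/3) ^ (r+1) * r.factorial := by
    rw [int_pow_exp h3 r, one_div, inv_div]
  have hA : IntegrableOn (fun x : ℝ => (1/lam) * (x ^ r * Real.exp (-(1/lam * x)))) (Ioi 0) :=
    (hF _ h1).const_mul _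
  have hB : IntegrableOn (fun x : ℝ => (2/lam) * (x ^ r * Real.exp (-(2/lam * x)))) (Ioi 0) :=
    (hF _ h2).const_mul _
  have hB' : IntegrableOn (fun x : ℝ => (1/lam) * (x ^ r * Real.exp (-(2/lam * x)))) (Ioi 0) :=
    (hF _ h2).const_mul _
  have hC : IntegrableOn (fun x : ℝ => (1/lam) * (x ^ r * Real.exp (-(3/lam * x)))) (Ioi 0) :=
    (hF _ h3).const_mul _
  have hAB : IntegrableOn (fun x : ℝ => (1/lam) * (x ^ r * Real.exp (-(1/lam * x)))
      - (1/lam) * (x ^ r * Real.exp (-(2/lam * x)))) (Ioi 0) := hA.sub hB'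
  have hIG1 : ∫ x in Ioi (0:ℝ), G1 x = lam ^ r * r.factorial * (1 - (1/2:ℝ) ^ r) := by
    rw [hG1]
    simp only
    rw [integral_sub hA hB, integral_const_mul, integral_const_mul, hI1, hI2]
    field_simp
    ring
  have hIG2 : ∫ x in Ioi (0:ℝ), G2 x
      = lam ^ r * r.factorial * (1 - (1/2:ℝ) ^ (r+1) + (1/3:ℝ) ^ (r+1)) := by
    rw [hG2]
    simp only
    rw [integral_add hAB hC, integral_sub hA hB', integral_const_mul, integral_const_mul,
      integral_const_mul, hI1, hI2, hI3]
    field_simp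
    ring
  constructor
  · rw [← hIG1]
    exact setIntegral_mono_on hG1i hfi measurableSet_Ioi hgle
  · rw [← hIG2]
    exact setIntegral_mono_on hfi hG2i measurableSet_Ioi hfle


noncomputable def uu (r : ℕ) : ℝ := 1 - (1/2 : ℝ) ^ (r+1) + (1/3 : ℝ) ^ (r+1)

lemma uu_lt_one (r : ℕ) : uu r < 1 := by
  have h : (1/3 : ℝ) ^ (r+1) < (1/2 : ℝ) ^ (r+1) :=
    pow_lt_pow_left₀ (by norm_num) (by norm_num) (Nat.succ_ne_zero r)
  unfold uu; linarith

lemma uu_half (r : ℕ) : 1/2 ≤ uu r := by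
  have h : (1/2 : ℝ) ^ (r+1) ≤ (1/2 : ℝ) ^ 1 :=
    pow_le_pow_of_le_one (by norm_num) (by norm_num) (Nat.le_add_left 1 r)
  have h3 : (0:ℝ) ≤ (1/3 : ℝ) ^ (r+1) := by positivity
  rw [pow_one] at h
  unfold uu; linarith

lemma uu_nonneg (r : ℕ) : 0 ≤ uu r := le_trans (by norm_num) (uu_half r)

lemma aux_pow (k : ℕ) : 2 * (1/3 : ℝ) ^ (k+2) ≤ (1/2 : ℝ) ^ (k+2) := by
  induction k with
  | zero => norm_num
  | succ n ih =>
    have h2 : (0:ℝ) ≤ (1/2 : ℝ) ^ (n+2) := by positivity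
    have h3 : (0:ℝ) ≤ (1/3 : ℝ) ^ (n+2) := by positivity
    have e2 : (1/2 : ℝ) ^ (n+1+2) = (1/2 : ℝ) ^ (n+2) * (1/2) := pow_succ _ _
    have e3 : (1/3 : ℝ) ^ (n+1+2) = (1/3 : ℝ) ^ (n+2) * (1/3) := pow_succ _ _
    rw [e2, e3]
    linarith

lemma uu_mono : Monotone uu := by
  apply monotone_nat_of_le_succ
  intro r
  have h := aux_pow r
  unfold uu
  rw [show r+1+1 = r+2 by ring]
  have e2 : (1/2 : ℝ) ^ (r+1) = 2 * (1/2 : ℝ) ^ (r+2) := by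
    rw [pow_succ]; ring
  have e3 : (1/3 : ℝ) ^ (r+1) = 3 * (1/3 : ℝ) ^ (r+2) := by
    rw [pow_succ]; ring
  rw [e2, e3]
  linarith

lemma fact2 (a b : ℕ) (ha : 1 ≤ a) (hb : 1 ≤ b) :
    2 * (a.factorial * b.factorial) ≤ (a+b).factorial := by
  induction a, ha using Nat.le_induction with
  | base =>
    rw [Nat.factorial_one, one_mul, show 1+b = b+1 by ring, Nat.factorial_succ]
    have : 2 ≤ b + 1 := by omega
    exact Nat.mul_le_mul_right _ this
  | succ n hn ih =>
    have h1 : 2 * ((n+1).factorial * b.factorial) = (n+1) * (2 * (n.factorial * b.factorial)) := by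
      rw [Nat.factorial_succ]; ring
    rw [h1, show n+1+b = (n+b)+1 by ring, Nat.factorial_succ]
    calc (n+1) * (2 * (n.factorial * b.factorial)) ≤ (n+1) * (n+b).factorial :=
          Nat.mul_le_mul_left _ ih
      _ ≤ (n+b+1) * (n+b).factorial := Nat.mul_le_mul_right _ (by omega)

noncomputable def gg (r : ℕ) : ℝ := 2 * r.factorial * uu r

lemma gg_mul (a b : ℕ) (ha : 1 ≤ a) (hb : 1 ≤ b) : gg a * gg b ≤ gg (a+b) := by
  have hab : (2 * (a.factorial * b.factorial) : ℝ) ≤ ((a+b).factorial : ℝ) := by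
    exact_mod_cast fact2 a b ha hb
  have h1 : uu a ≤ 1 := le_of_lt (uu_lt_one a)
  have h2 : uu b ≤ uu (a+b) := uu_mono (Nat.le_add_left b a)
  have h3 : 0 ≤ uu b := uu_nonneg b
  have h4 : 0 ≤ uu a := uu_nonneg a
  have h5 : (0:ℝ) ≤ ((a+b).factorial : ℝ) := Nat.cast_nonneg _
  unfold gg
  calc 2 * a.factorial * uu a * (2 * b.factorial * uu b)
      = (2 * ((a.factorial : ℝ) * b.factorial)) * (2 * (uu a * uu b)) := by push_cast; ring
    _ ≤ ((a+b).factorial : ℝ) * (2 * (uu a * uu b)) := by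
        apply mul_le_mul_of_nonneg_right hab
        positivity
    _ ≤ ((a+b).factorial : ℝ) * (2 * uu (a+b)) := by
        apply mul_le_mul_of_nonneg_left _ h5
        have : uu a * uu b ≤ uu b := by nlinarith
        linarith
    _ = 2 * ((a+b).factorial : ℝ) * uu (a+b) := by ring

lemma moment_le {lam : ℝ} (hlam : 0 < lam) (r : ℕ) :
    ∫ x, |x| ^ r ∂(logisticMeasure lam) ≤ lam ^ r * gg r := by
  rw [moment_eq' hlam r]
  have h := (half_int_bounds hlam r).2
  unfold gg uu
  linarith

lemma moment_ge {lam : ℝ} (hlam : 0 < lam) (r : ℕ) (hr : 1 ≤ r) :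
    lam ^ r * r.factorial ≤ ∫ x, |x| ^ r ∂(logisticMeasure lam) := by
  rw [moment_eq' hlam r]
  have h := (half_int_bounds hlam r).1
  have h2 : (1/2 : ℝ) ^ r ≤ (1/2 : ℝ) ^ 1 :=
    pow_le_pow_of_le_one (by norm_num) (by norm_num) hr
  rw [pow_one] at h2
  have h3 : (0:ℝ) ≤ lam ^ r * r.factorial := by positivity
  nlinarith

lemma moment_pos {lam : ℝ} (hlam : 0 < lam) (r : ℕ) (hr : 1 ≤ r) :
    0 < ∫ x, |x| ^ r ∂(logisticMeasure lam) := by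
  have h := moment_ge hlam r hr
  have : (0:ℝ) < lam ^ r * r.factorial := by
    have := Nat.factorial_pos r
    positivity
  linarith

lemma sum_pos_of_ne_nil {L : List ℕ} (hne : L ≠ []) (hpos : ∀ r ∈ L, 0 < r) : 1 ≤ L.sum := by
  cases L with
  | nil => exact absurd rfl hne
  | cons a t =>
    have : 0 < a := hpos a List.mem_cons_self
    simp only [List.sum_cons]
    omega

lemma prod_le_g {lam : ℝ} (hlam : 0 < lam) :
    ∀ L : List ℕ, L ≠ [] → (∀ r ∈ L, 0 < r) →
      (L.map fun r => ∫ x, |x| ^ r ∂(logisticMeasure lam)).prod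
        ≤ lam ^ L.sum * gg L.sum := by
  intro L
  induction L with
  | nil => intro h; exact absurd rfl h
  | cons a t ih =>
    intro _ hpos
    have ha : 1 ≤ a := hpos a List.mem_cons_self
    have hma : ∫ x, |x| ^ a ∂(logisticMeasure lam) ≤ lam ^ a * gg a := moment_le hlam a
    rcases eq_or_ne t [] with rfl | hne
    · simpa using hma
    · have htpos : ∀ r ∈ t, 0 < r := fun r hr => hpos r (List.mem_cons_of_mem a hr)
      have hts : 1 ≤ t.sum := sum_pos_of_ne_nil hne htpos
      have hprodpos : 0 < (t.map fun r => ∫ x, |x| ^ r ∂(logisticMeasure lam)).prod := by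
        apply List.prod_pos
        intro p hp
        rcases List.mem_map.mp hp with ⟨r, hr, rfl⟩
        exact moment_pos hlam r (htpos r hr)
      have hga : 0 ≤ lam ^ a * gg a := by
        have := moment_pos hlam a ha
        linarith
      have h1 := ih hne htpos
      calc ((a :: t).map fun r => ∫ x, |x| ^ r ∂(logisticMeasure lam)).prod
          = (∫ x, |x| ^ a ∂(logisticMeasure lam))
            * (t.map fun r => ∫ x, |x| ^ r ∂(logisticMeasure lam)).prod := by
            simp [List.map_cons, List.prod_cons]
        _ ≤ (lam ^ a * gg a) * (lam ^ t.sum * gg t.sum) :=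
            mul_le_mul hma h1 (le_of_lt hprodpos) hga
        _ = lam ^ (a + t.sum) * (gg a * gg t.sum) := by rw [pow_add]; ring
        _ ≤ lam ^ (a + t.sum) * gg (a + t.sum) := by
            apply mul_le_mul_of_nonneg_left (gg_mul a t.sum ha hts) (by positivity)
        _ = lam ^ ((a :: t).sum) * gg ((a :: t).sum) := by rw [List.sum_cons]

end Aux

/-- For the logistic measure `ω` with scale `λ`, the constant
`C(M,ω) = max{∏ m_{r_j} : r₁+⋯+r_ℓ = M, r_j ≥ 1}`, with
`m_r = E_ω|x|^r`, satisfies `λ^M M!/2 < C(M,ω) < 2 λ^M M!`. -/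
theorem C_logistic_bounds (lam : ℝ) (hlam : 0 < lam) (M : ℕ) (hM : 1 ≤ M) :
    (1 / 2) * lam ^ M * (Nat.factorial M : ℝ)
      < sSup {p : ℝ | ∃ L : List ℕ, (∀ r ∈ L, 0 < r) ∧ L.sum = M ∧
          p = (L.map fun r => ∫ x, |x| ^ r ∂(logisticMeasure lam)).prod} ∧
    sSup {p : ℝ | ∃ L : List ℕ, (∀ r ∈ L, 0 < r) ∧ L.sum = M ∧
          p = (L.map fun r => ∫ x, |x| ^ r ∂(logisticMeasure lam)).prod}
      < 2 * lam ^ M * (Nat.factorial M : ℝ) := by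
  set S := {p : ℝ | ∃ L : List ℕ, (∀ r ∈ L, 0 < r) ∧ L.sum = M ∧
      p = (L.map fun r => ∫ x, |x| ^ r ∂(logisticMeasure lam)).prod} with hS
  have hmem : (∫ x, |x| ^ M ∂(logisticMeasure lam)) ∈ S := by
    refine ⟨[M], ?_, by simp, by simp⟩
    intro r hr
    rw [List.mem_singleton] at hr
    omega
  have hub : ∀ p ∈ S, p ≤ lam ^ M * gg M := by
    rintro p ⟨L, hpos, hsum, rfl⟩
    have hne : L ≠ [] := by
      intro h
      rw [h] at hsum
      simp at hsum
      omega
    have := prod_le_g hlam L hne hpos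
    rwa [hsum] at this
  have hbdd : BddAbove S := ⟨lam ^ M * gg M, hub⟩
  have hfactpos : (0:ℝ) < (Nat.factorial M : ℝ) := by exact_mod_cast Nat.factorial_pos M
  constructor
  · have h1 : lam ^ M * M.factorial ≤ sSup S :=
      le_trans (moment_ge hlam M hM) (le_csSup hbdd hmem)
    have h2 : (0:ℝ) < lam ^ M * M.factorial := by positivity
    linarith
  · have h1 : sSup S ≤ lam ^ M * gg M := csSup_le ⟨_, hmem⟩ hub
    have h2 : lam ^ M * gg M < 2 * lam ^ M * (Nat.factorial M : ℝ) := by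
      unfold gg
      have hu := uu_lt_one M
      have hp : (0:ℝ) < lam ^ M * (Nat.factorial M : ℝ) := by positivity
      nlinarith
    linarith
end

section
/- For the r-folded Wiener kernel K_r and real numbers 0 ≤ Y_k ≤ Y_∞, the quantity E(Y_∞,Y_k) := ∫₀^∞ [(Y_∞−t)_+^{r−1} − (Y_k−t)_+^{r−1}]² dt satisfies E(Y_∞,Y_k) ≤ (Y_∞ − Y_k)² Y_∞^{2r−3} [1/(2r−1) + (r−1)²/(2r−3)]. -/
open MeasureTheory

private lemma pow_sub_pow_le_aux {a b : ℝ} (hb : 0 ≤ b) (hba : b ≤ a) (m : ℕ) :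
    a ^ m - b ^ m ≤ m * a ^ (m - 1) * (a - b) := by
  have ha : 0 ≤ a := hb.trans hba
  induction m with
  | zero => simp
  | succ k ih =>
    have hbk : b ^ k ≤ a ^ k := pow_le_pow_left₀ hb hba k
    have h1 : a ^ (k + 1) - b ^ (k + 1) = a * (a ^ k - b ^ k) + (a - b) * b ^ k := by ring
    have h2 : a * (a ^ k - b ^ k) ≤ (k : ℝ) * a ^ k * (a - b) := by
      cases k with
      | zero => simp
      | succ j =>
        have := mul_le_mul_of_nonneg_left ih ha
        calc a * (a ^ (j + 1) - b ^ (j + 1))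
            ≤ a * ((j + 1 : ℕ) * a ^ (j + 1 - 1) * (a - b)) := this
          _ = ((j + 1 : ℕ) : ℝ) * a ^ (j + 1) * (a - b) := by
              simp only [Nat.add_sub_cancel]; push_cast; rw [pow_succ]; ring
    have h3 : (a - b) * b ^ k ≤ (a - b) * a ^ k :=
      mul_le_mul_of_nonneg_left hbk (by linarith)
    calc a ^ (k + 1) - b ^ (k + 1) = a * (a ^ k - b ^ k) + (a - b) * b ^ k := h1
      _ ≤ (k : ℝ) * a ^ k * (a - b) + (a - b) * a ^ k := add_le_add h2 h3
      _ = ((k + 1 : ℕ) : ℝ) * a ^ (k + 1 - 1) * (a - b) := by push_cast; ring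

/-- For the `r`-folded Wiener kernel, with `0 ≤ Y_k ≤ Y_∞`:
`∫₀^∞ [(Y_∞-t)_+^{r-1} - (Y_k-t)_+^{r-1}]² dt
  ≤ (Y_∞-Y_k)² Y_∞^{2r-3} [1/(2r-1) + (r-1)²/(2r-3)]`. -/
theorem rfold_E_bound (r : ℕ) (hr : 2 ≤ r) (Yk Yinf : ℝ)
    (h0 : 0 ≤ Yk) (h1 : Yk ≤ Yinf) :
    ∫ t in Set.Ioi (0 : ℝ),
        (max (Yinf - t) 0 ^ (r - 1) - max (Yk - t) 0 ^ (r - 1)) ^ 2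
      ≤ (Yinf - Yk) ^ 2 * Yinf ^ (2 * r - 3)
          * (1 / (2 * (r : ℝ) - 1) + ((r : ℝ) - 1) ^ 2 / (2 * (r : ℝ) - 3)) := by
  set m : ℕ := r - 1 with hm
  set n : ℕ := r - 2 with hn
  have hm1 : 1 ≤ m := by omega
  have hY : (0 : ℝ) ≤ Yinf := h0.trans h1
  set Δ : ℝ := Yinf - Yk with hΔ
  have hΔ0 : 0 ≤ Δ := by simp [hΔ]; linarith
  set g : ℝ → ℝ := fun t => (max (Yinf - t) 0 ^ m - max (Yk - t) 0 ^ m) ^ 2 with hg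
  have hg_cont : Continuous g := by fun_prop
  -- g vanishes beyond Yinf
  have hg_zero : ∀ t ∈ Set.Ioi Yinf, g t = 0 := by
    intro t ht
    have h1' : max (Yinf - t) 0 = 0 := max_eq_right (by simp at ht ⊢; linarith)
    have h2' : max (Yk - t) 0 = 0 := max_eq_right (by simp at ht ⊢; linarith)
    simp [hg, h1', h2', zero_pow (by omega : m ≠ 0)]
  have hint1 : IntegrableOn g (Set.Ioc 0 Yinf) := hg_cont.integrableOn_Ioc
  have hint2 : IntegrableOn g (Set.Ioi Yinf) := by
    apply (integrableOn_zero (ε' := ℝ)).congr_fun (fun t ht => (hg_zero t ht).symm)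
      measurableSet_Ioi
  have hsplit : ∫ t in Set.Ioi (0 : ℝ), g t
      = ∫ t in Set.Ioc 0 Yinf, g t := by
    rw [← Set.Ioc_union_Ioi_eq_Ioi hY,
      setIntegral_union (Set.Ioc_disjoint_Ioi le_rfl) measurableSet_Ioi hint1 hint2,
      setIntegral_eq_zero_of_forall_eq_zero hg_zero, add_zero]
  -- pointwise bound on Ioc 0 Yinf
  set C : ℝ := ((m : ℝ) * Δ) ^ 2 with hC
  have hpt : ∀ t ∈ Set.Ioc (0 : ℝ) Yinf, g t ≤ C * (Yinf - t) ^ (2 * n) := by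
    intro t ht
    obtain ⟨ht0, htY⟩ := ht
    set a : ℝ := max (Yinf - t) 0 with ha
    set b : ℝ := max (Yk - t) 0 with hb
    have hb0 : 0 ≤ b := le_max_right _ _
    have hba : b ≤ a := max_le_max (by linarith) le_rfl
    have haeq : a = Yinf - t := max_eq_left (by linarith)
    have hab : a - b ≤ Δ := by
      rcases le_total 0 (Yk - t) with h | h
      · have : b = Yk - t := max_eq_left h
        rw [haeq, this]; simp [hΔ]
      · have : b = 0 := max_eq_right h
        rw [haeq, this, hΔ]; linarith
    have hfnn : 0 ≤ a ^ m - b ^ m := sub_nonneg.2 (pow_le_pow_left₀ hb0 hba m)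
    have ha0 : 0 ≤ a := hb0.trans hba
    have han : 0 ≤ a ^ (m - 1) := pow_nonneg ha0 _
    have hf : a ^ m - b ^ m ≤ (m : ℝ) * Δ * a ^ n := by
      have := pow_sub_pow_le_aux hb0 hba m
      have h2 : (m : ℝ) * a ^ (m - 1) * (a - b) ≤ (m : ℝ) * a ^ (m - 1) * Δ :=
        mul_le_mul_of_nonneg_left hab (by positivity)
      have hmn : m - 1 = n := by omega
      calc a ^ m - b ^ m ≤ (m : ℝ) * a ^ (m - 1) * (a - b) := this
        _ ≤ (m : ℝ) * a ^ (m - 1) * Δ := h2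
        _ = (m : ℝ) * Δ * a ^ n := by rw [hmn]; ring
    have hsq : (a ^ m - b ^ m) ^ 2 ≤ ((m : ℝ) * Δ * a ^ n) ^ 2 :=
      pow_le_pow_left₀ hfnn hf 2
    calc g t = (a ^ m - b ^ m) ^ 2 := rfl
      _ ≤ ((m : ℝ) * Δ * a ^ n) ^ 2 := hsq
      _ = C * (Yinf - t) ^ (2 * n) := by
          rw [mul_pow, ← pow_mul, Nat.mul_comm n 2, haeq, hC]
  have hint3 : IntegrableOn (fun t => C * (Yinf - t) ^ (2 * n)) (Set.Ioc 0 Yinf) := by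
    apply Continuous.integrableOn_Ioc; fun_prop
  have hmono : ∫ t in Set.Ioc 0 Yinf, g t
      ≤ ∫ t in Set.Ioc 0 Yinf, C * (Yinf - t) ^ (2 * n) :=
    setIntegral_mono_on hint1 hint3 measurableSet_Ioc hpt
  -- compute the right integral
  have hcomp : ∫ t in Set.Ioc 0 Yinf, C * (Yinf - t) ^ (2 * n)
      = C * (Yinf ^ (2 * n + 1) / (2 * (n : ℝ) + 1)) := by
    rw [integral_const_mul, ← intervalIntegral.integral_of_le hY]
    congr 1
    have := intervalIntegral.integral_comp_sub_left (a := 0) (b := Yinf)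
      (fun t => t ^ (2 * n)) Yinf
    simp only [sub_zero, sub_self] at this
    rw [this, integral_pow]
    simp
  rw [hsplit]
  refine hmono.trans (hcomp.le.trans ?_)
  -- final arithmetic
  have hmc : (m : ℝ) = (r : ℝ) - 1 := by
    rw [hm, Nat.cast_sub (by omega)]; simp
  have hnc : (n : ℝ) = (r : ℝ) - 2 := by
    rw [hn, Nat.cast_sub hr]; simp
  have hexp : 2 * n + 1 = 2 * r - 3 := by omega
  have hrR : (2 : ℝ) ≤ (r : ℝ) := by exact_mod_cast hr
  have h2r3 : (0 : ℝ) < 2 * (r : ℝ) - 3 := by linarith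
  have h2r1 : (0 : ℝ) < 2 * (r : ℝ) - 1 := by linarith
  have hcast : 2 * (n : ℝ) + 1 = 2 * (r : ℝ) - 3 := by
    rw [hnc]; ring
  rw [hexp] at *
  have hYp : 0 ≤ Yinf ^ (2 * r - 3) := pow_nonneg hY _
  have key : C * (Yinf ^ (2 * r - 3) / (2 * (r : ℝ) - 3))
      = (Yinf - Yk) ^ 2 * Yinf ^ (2 * r - 3) * (((r : ℝ) - 1) ^ 2 / (2 * (r : ℝ) - 3)) := by
    rw [hC, hmc, hΔ]; ring
  calc C * (Yinf ^ (2 * r - 3) / (2 * (n : ℝ) + 1))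
      = C * (Yinf ^ (2 * r - 3) / (2 * (r : ℝ) - 3)) := by rw [hcast]
    _ = (Yinf - Yk) ^ 2 * Yinf ^ (2 * r - 3) * (((r : ℝ) - 1) ^ 2 / (2 * (r : ℝ) - 3)) := key
    _ ≤ (Yinf - Yk) ^ 2 * Yinf ^ (2 * r - 3)
          * (1 / (2 * (r : ℝ) - 1) + ((r : ℝ) - 1) ^ 2 / (2 * (r : ℝ) - 3)) := by
        apply mul_le_mul_of_nonneg_left _ (by positivity)
        have : 0 ≤ 1 / (2 * (r : ℝ) - 1) := by positivity
        linarith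
end
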